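/- The contraction map Φ^k: H^* ⊗ L_n(k+1) → H^{⊗k}, given by embedding L_n(k+1) into H^{⊗(k+1)} and contracting the dual vector against the first tensor factor, satisfies Φ^k(x_i^* ⊗ [x_{i_1},…,x_{i_{k+1}}]) = δ_{i,i_1} x_{i_2}⊗⋯⊗x_{i_{k+1}} − Σ_{l=2}^{k+1} δ_{i,i_l} ι([x_{i_1},…,x_{i_{l-1}}]) ⊗ x_{i_{l+1}}⊗⋯⊗x_{i_{k+1}}, where ι is the embedding of the free Lie ring into the tensor algebra. -/

import Mathlib

open FreeLieAlgebra

/-- The degree-`k` homogeneous part of the free Lie ring on `n` generators,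
spanned by left-normed brackets of `k` generators. -/
noncomputable def Ln (n : ℕ) : ℕ → Submodule ℤ (FreeLieAlgebra ℤ (Fin n))
  | 0 => ⊥
  | 1 => Submodule.span ℤ (Set.range (FreeLieAlgebra.of ℤ))
  | (k+2) => Submodule.span ℤ
      {y | ∃ a ∈ Ln n (k+1), ∃ i : Fin n, y = ⁅a, FreeLieAlgebra.of ℤ i⁆}

/-- Left-normed bracket `[x, xs₁, xs₂, …]`. -/
noncomputable def lnb {n : ℕ} (x : Fin n) (xs : List (Fin n)) : FreeLieAlgebra ℤ (Fin n) :=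
  xs.foldl (fun a j => ⁅a, FreeLieAlgebra.of ℤ j⁆) (FreeLieAlgebra.of ℤ x)

/-- The tangential derivation module `p_n(k)` in the representation
`H^* ⊗ L_n(k+1) ≅ (Fin n → L_n)`, spanned by the `x_i^* ⊗ [c, x_i]`. -/
noncomputable def pnM (n k : ℕ) : Submodule ℤ (Fin n → FreeLieAlgebra ℤ (Fin n)) :=
  Submodule.span ℤ
    {f | ∃ i : Fin n, ∃ c ∈ Ln n k, f = Pi.single i ⁅c, FreeLieAlgebra.of ℤ i⁆}

/-- Summation map sending `Σ x_i^* ⊗ C_i` to `Σ C_i`. -/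
noncomputable def sumMap (n : ℕ) :
    (Fin n → FreeLieAlgebra ℤ (Fin n)) →ₗ[ℤ] FreeLieAlgebra ℤ (Fin n) :=
  LinearMap.lsum ℤ (fun _ : Fin n => FreeLieAlgebra ℤ (Fin n)) ℤ (fun _ => LinearMap.id)

/-- The special derivation module `b_n(k)`. -/
noncomputable def bnM (n k : ℕ) : Submodule ℤ (Fin n → FreeLieAlgebra ℤ (Fin n)) :=
  pnM n k ⊓ LinearMap.ker (sumMap n)

attribute [local instance 100] LieRing.ofAssociativeRing

/-- The embedding of the free Lie ring into the tensor (free) algebra. -/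
noncomputable def embT (n : ℕ) : FreeLieAlgebra ℤ (Fin n) →ₗ[ℤ] FreeAlgebra ℤ (Fin n) :=
  (FreeLieAlgebra.lift ℤ (fun i : Fin n => FreeAlgebra.ι ℤ i)).toLinearMap

/-- The word `x_{j₁} ⊗ ⋯ ⊗ x_{j_m}` in the tensor algebra. -/
def wordT {n : ℕ} (L : List (Fin n)) : FreeAlgebra ℤ (Fin n) :=
  (L.map (FreeAlgebra.ι ℤ)).prod

/-- Contraction of the first tensor factor against `x_i^*`. -/
noncomputable def contractT (n : ℕ) (i : Fin n) :
    FreeAlgebra ℤ (Fin n) →ₗ[ℤ] FreeAlgebra ℤ (Fin n) :=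
  (FreeAlgebra.basisFreeMonoid ℤ (Fin n)).constr ℤ fun w =>
    match FreeMonoid.toList w with
    | [] => 0
    | j :: rest => if j = i then wordT rest else 0

/-- Abelianization of the tensor algebra, `T(H) → ⊕ₖ Sᵏ H`. -/
noncomputable def abelT (n : ℕ) : FreeAlgebra ℤ (Fin n) →ₐ[ℤ] MvPolynomial (Fin n) ℤ :=
  FreeAlgebra.lift ℤ (fun i : Fin n => MvPolynomial.X i)

/-- The Morita trace component at index `p`. -/
noncomputable def MTc (n : ℕ) (p : Fin n) :
    FreeLieAlgebra ℤ (Fin n) →ₗ[ℤ] MvPolynomial (Fin n) ℤ :=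
  (abelT n).toLinearMap ∘ₗ contractT n p ∘ₗ embT n

/-- The full Morita trace on `H^* ⊗ L_n(k+1) ≅ (Fin n → L_n)`. -/
noncomputable def MTfull (n : ℕ) :
    (Fin n → FreeLieAlgebra ℤ (Fin n)) →ₗ[ℤ] MvPolynomial (Fin n) ℤ :=
  LinearMap.lsum ℤ (fun _ : Fin n => FreeLieAlgebra ℤ (Fin n)) ℤ (fun p => MTc n p)

/- ### Auxiliary lemmas -/


lemma wordT_nil {n : ℕ} : wordT ([] : List (Fin n)) = 1 := rfl

lemma wordT_cons {n : ℕ} (j : Fin n) (L : List (Fin n)) :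
    wordT (j :: L) = FreeAlgebra.ι ℤ j * wordT L := by simp [wordT]

lemma wordT_append {n : ℕ} (A B : List (Fin n)) :
    wordT (A ++ B) = wordT A * wordT B := by simp [wordT]

lemma wordT_singleton {n : ℕ} (j : Fin n) : wordT [j] = FreeAlgebra.ι ℤ j := by simp [wordT]

lemma basis_eq_wordT (n : ℕ) (w : FreeMonoid (Fin n)) :
    FreeAlgebra.basisFreeMonoid ℤ (Fin n) w = wordT (FreeMonoid.toList w) := by
  simp [FreeAlgebra.basisFreeMonoid, FreeAlgebra.equivMonoidAlgebraFreeMonoid, wordT]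
  erw [one_smul, FreeMonoid.lift_apply]

lemma contract_wordT (n : ℕ) (i : Fin n) (L : List (Fin n)) :
    contractT n i (wordT L) =
      (match L with
        | [] => 0
        | j :: rest => if j = i then wordT rest else 0) := by
  have h : wordT L = FreeAlgebra.basisFreeMonoid ℤ (Fin n) (FreeMonoid.ofList L) := by
    rw [basis_eq_wordT]; simp
  erw [h, contractT, Module.Basis.constr_basis]
  simp

lemma contract_one (n : ℕ) (i : Fin n) : contractT n i 1 = 0 := by
  have := contract_wordT n i []
  simpa [wordT_nil] using this

lemma contract_iota (n : ℕ) (i j : Fin n) :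
    contractT n i (FreeAlgebra.ι ℤ j) = if j = i then 1 else 0 := by
  have := contract_wordT n i [j]
  simpa [wordT_singleton, wordT_nil] using this

lemma contract_iota_mul (n : ℕ) (i j : Fin n) (y : FreeAlgebra ℤ (Fin n)) :
    contractT n i (FreeAlgebra.ι ℤ j * y) = if j = i then y else 0 := by
  have h : (contractT n i).comp (LinearMap.mulLeft ℤ (FreeAlgebra.ι ℤ j)) =
      if j = i then (LinearMap.id : FreeAlgebra ℤ (Fin n) →ₗ[ℤ] FreeAlgebra ℤ (Fin n)) else 0 := by
    apply (FreeAlgebra.basisFreeMonoid ℤ (Fin n)).ext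
    intro w
    simp only [LinearMap.comp_apply, LinearMap.mulLeft_apply, basis_eq_wordT]
    show contractT n i (FreeAlgebra.ι ℤ j * wordT (FreeMonoid.toList w)) = _
    rw [← wordT_cons, contract_wordT]
    by_cases hji : j = i <;> simp [hji] <;> rfl
  have := LinearMap.congr_fun h y
  simp only [LinearMap.comp_apply, LinearMap.mulLeft_apply] at this
  rw [this]
  by_cases hji : j = i <;> simp [hji]

lemma eps_iota (n : ℕ) (j : Fin n) :
    FreeAlgebra.algebraMapInv (FreeAlgebra.ι ℤ j) = (0 : ℤ) := by
  simp [FreeAlgebra.algebraMapInv]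

lemma contract_mul (n : ℕ) (i : Fin n) (x y : FreeAlgebra ℤ (Fin n)) :
    contractT n i (x * y) =
      contractT n i x * y + (FreeAlgebra.algebraMapInv x : ℤ) • contractT n i y := by
  induction x using FreeAlgebra.induction generalizing y with
  | grade0 r =>
      rw [Algebra.algebraMap_eq_smul_one, smul_mul_assoc, one_mul, map_smul, map_smul,
        contract_one, map_smul]
      simp
  | grade1 j =>
      rw [contract_iota_mul, contract_iota, eps_iota]
      by_cases hji : j = i <;> simp [hji]
  | mul a b ha hb =>
      rw [mul_assoc, ha, hb, ha, map_mul]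
      simp only [add_mul, smul_add, smul_mul_assoc, smul_smul, mul_assoc]
      abel
  | add a b ha hb =>
      rw [add_mul, map_add, ha, hb, map_add, map_add]
      simp only [add_mul, add_smul]
      abel

lemma emb_of (n : ℕ) (j : Fin n) :
    embT n (FreeLieAlgebra.of ℤ j) = FreeAlgebra.ι ℤ j := by
  simp [embT]
  exact FreeLieAlgebra.lift_of_apply _ _

lemma emb_lie (n : ℕ) (a b : FreeLieAlgebra ℤ (Fin n)) :
    embT n ⁅a, b⁆ = embT n a * embT n b - embT n b * embT n a := by
  show (FreeLieAlgebra.lift ℤ (fun i : Fin n => FreeAlgebra.ι ℤ i)) ⁅a, b⁆ = _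
  rw [LieHom.map_lie, Ring.lie_def]
  rfl

lemma lnb_concat {n : ℕ} (j₀ : Fin n) (L : List (Fin n)) (j : Fin n) :
    lnb j₀ (L ++ [j]) = ⁅lnb j₀ L, FreeLieAlgebra.of ℤ j⁆ := by
  simp [lnb, List.foldl_concat]

lemma eps_emb_lnb (n : ℕ) (j₀ : Fin n) (L : List (Fin n)) :
    FreeAlgebra.algebraMapInv (embT n (lnb j₀ L)) = (0 : ℤ) := by
  induction L using List.reverseRecOn with
  | nil => simpa [lnb] using eps_iota n j₀ ▸ congrArg FreeAlgebra.algebraMapInv (emb_of n j₀)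
  | append_singleton M j ih =>
      rw [lnb_concat, emb_lie, map_sub, map_mul, map_mul, ih]
      ring


/-- Formula for the contraction `Φᵏ`: for a left-normed bracket `[x_{j₀}, L]`,
`Φᵏ(x_i^* ⊗ [x_{j₀},…]) = δ_{i,j₀} x_{i₂}⊗⋯ − Σₗ δ_{i,iₗ} ι([x_{j₀},…,x_{i_{l-1}}]) ⊗ x_{i_{l+1}}⊗⋯`,
where `ι` is the embedding of the free Lie ring into the tensor algebra. -/
theorem contraction_formula (n : ℕ) (i j₀ : Fin n) (L : List (Fin n)) :
    contractT n i (embT n (lnb j₀ L)) =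
      (if i = j₀ then wordT L else 0) -
        ∑ t : Fin L.length,
          if i = L.get t then embT n (lnb j₀ (L.take t)) * wordT (L.drop (t + 1)) else 0 := by
  induction L using List.reverseRecOn with
  | nil =>
      simp only [lnb, List.foldl_nil, emb_of, contract_iota, List.length_nil,
        Finset.univ_eq_empty, Finset.sum_empty, sub_zero, wordT_nil]
      by_cases h : i = j₀
      · simp [h]
      · have h' : ¬ j₀ = i := fun hh => h hh.symm
        simp [h, h']
  | append_singleton M j ih =>
      have hlen : (M ++ [j]).length = M.length + 1 := by simp
      rw [lnb_concat, emb_lie, emb_of, map_sub, contract_mul, contract_iota_mul, ih,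
        eps_emb_lnb]
      rw [← Fin.sum_congr' (fun t : Fin (M ++ [j]).length =>
        if i = (M ++ [j]).get t then
          embT n (lnb j₀ ((M ++ [j]).take t)) * wordT ((M ++ [j]).drop (t + 1)) else 0) hlen.symm,
        Fin.sum_univ_castSucc]
      have hterm : ∀ t : Fin M.length,
          (if i = (M ++ [j]).get (Fin.cast hlen.symm t.castSucc) then
            embT n (lnb j₀ ((M ++ [j]).take (Fin.cast hlen.symm t.castSucc)))
              * wordT ((M ++ [j]).drop ((Fin.cast hlen.symm t.castSucc) + 1)) else 0) =
          (if i = M.get t then embT n (lnb j₀ (M.take t)) * wordT (M.drop (t + 1)) else 0)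
            * FreeAlgebra.ι ℤ j := by
        intro t
        have ht : (t : ℕ) < M.length := t.isLt
        have h1 : (M ++ [j]).get (Fin.cast hlen.symm t.castSucc) = M.get t := by
          simp [List.get_eq_getElem, List.getElem_append_left ht]
        have h2 : (M ++ [j]).take ((Fin.cast hlen.symm t.castSucc) : ℕ) = M.take t :=
          List.take_append_of_le_length (le_of_lt ht)
        have h3 : (M ++ [j]).drop (((Fin.cast hlen.symm t.castSucc) : ℕ) + 1) =
            M.drop (t + 1) ++ [j] :=
          List.drop_append_of_le_length ht
        rw [h1, h2, h3, wordT_append, wordT_singleton]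
        by_cases h : i = M.get t <;> simp [h, mul_assoc]
      have hlast :
          (if i = (M ++ [j]).get (Fin.cast hlen.symm (Fin.last M.length)) then
            embT n (lnb j₀ ((M ++ [j]).take (Fin.cast hlen.symm (Fin.last M.length))))
              * wordT ((M ++ [j]).drop ((Fin.cast hlen.symm (Fin.last M.length)) + 1)) else 0) =
          (if i = j then embT n (lnb j₀ M) else 0) := by
        have h1 : (M ++ [j]).get (Fin.cast hlen.symm (Fin.last M.length)) = j := by
          simp [List.get_eq_getElem, List.getElem_append_right (le_refl M.length)]
        have h2 : (M ++ [j]).take ((Fin.cast hlen.symm (Fin.last M.length)) : ℕ) = M := by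
          simp [List.take_append_of_le_length (le_refl M.length)]
        have h3 : (M ++ [j]).drop (((Fin.cast hlen.symm (Fin.last M.length)) : ℕ) + 1) = [] := by
          simp
        rw [h1, h2, h3, wordT_nil, mul_one]
      simp only [hterm, hlast]
      rw [← Finset.sum_mul]
      have hιj : (if j = i then embT n (lnb j₀ M) else 0) =
          (if i = j then embT n (lnb j₀ M) else 0) := by
        by_cases h : i = j
        · simp [h]
        · simp [h, Ne.symm h]
      rw [hιj]
      have hX : (if i = j₀ then wordT M else 0) * FreeAlgebra.ι ℤ j =
          (if i = j₀ then wordT (M ++ [j]) else 0) := by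
        by_cases h : i = j₀ <;> simp [h, wordT_append, wordT_singleton]
      rw [sub_mul, hX]
      set A := if i = j₀ then wordT (M ++ [j]) else 0
      set B := (∑ t : Fin M.length,
        if i = M.get t then embT n (lnb j₀ (M.take t)) * wordT (M.drop (t + 1)) else 0) *
          FreeAlgebra.ι ℤ j
      set C := if i = j then embT n (lnb j₀ M) else 0
      show A - B + (0:ℤ) • (contractT n i) (FreeAlgebra.ι ℤ j) - C = A - (B + C)
      simp only [zero_smul, add_zero]
      abel
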